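/- Let W, V be finite-dimensional Hilbert spaces, U = B(a, r) a ball in W, and φ : U → V a map such that there exist c > 0 and, for each x ∈ U, a linear map g^x : W → V with |φ(y) − (φ(x) + g^x(y − x))| ≤ c|y − x|² for all x, y ∈ U. Then φ is differentiable on U with derivative φ'(x) = g^x, and φ' : U → L(W, V) is Lipschitz with constant m·c for some absolute constant m (independent of W, V, U, φ). -/

import Mathlib

open Set Metric

noncomputable section

/-- Converse Taylor theorem: a uniform first-order quadratic approximation property on a
ball implies differentiability, with derivative Lipschitz of constant m·c for an absolute
constant m. -/
theorem stmt12 : ∃ m : ℝ, 0 < m ∧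
    ∀ (W V : Type) [NormedAddCommGroup W] [InnerProductSpace ℝ W]
      [FiniteDimensional ℝ W] [NormedAddCommGroup V] [InnerProductSpace ℝ V]
      [FiniteDimensional ℝ V]
      (a : W) (r c : ℝ) (φ : W → V) (g : W → (W →L[ℝ] V)),
      0 < c →
      (∀ x ∈ ball a r, ∀ y ∈ ball a r, ‖φ y - (φ x + g x (y - x))‖ ≤ c * ‖y - x‖ ^ 2) →
      (∀ x ∈ ball a r, HasFDerivAt φ (g x) x) ∧
        ∀ x ∈ ball a r, ∀ y ∈ ball a r, ‖g x - g y‖ ≤ m * c * ‖x - y‖ := by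
  refine ⟨6, by norm_num, ?_⟩
  intro W V _ _ _ _ _ _ a r c φ g hc h
  constructor
  · -- differentiability
    intro x hx
    rw [hasFDerivAt_iff_isLittleO_nhds_zero]
    rw [Asymptotics.isLittleO_iff]
    intro ε hε
    have hxa : dist x a < r := mem_ball.mp hx
    have hδ : 0 < min (r - dist x a) (ε / c) := lt_min (by linarith) (by positivity)
    filter_upwards [Metric.ball_mem_nhds (0 : W) hδ] with w hw
    rw [mem_ball, dist_zero_right] at hw
    have hwball : x + w ∈ ball a r := by
      rw [mem_ball]
      calc dist (x + w) a ≤ dist (x + w) x + dist x a := dist_triangle _ _ _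
        _ = ‖w‖ + dist x a := by rw [dist_eq_norm]; simp
        _ < r := by
            have := lt_of_lt_of_le hw (min_le_left _ _)
            linarith
    have hbd := h x hx (x + w) hwball
    rw [add_sub_cancel_left] at hbd
    have hwε : ‖w‖ ≤ ε / c := (lt_of_lt_of_le hw (min_le_right _ _)).le
    calc ‖φ (x + w) - φ x - (g x) w‖ = ‖φ (x + w) - (φ x + (g x) w)‖ := by
          rw [sub_add_eq_sub_sub]
      _ ≤ c * ‖w‖ ^ 2 := hbd
      _ = (c * ‖w‖) * ‖w‖ := by ring
      _ ≤ ε * ‖w‖ := by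
          apply mul_le_mul_of_nonneg_right _ (norm_nonneg _)
          calc c * ‖w‖ ≤ c * (ε / c) := mul_le_mul_of_nonneg_left hwε hc.le
            _ = ε := by field_simp
      _ = ε * ‖id w‖ := by simp
  · -- Lipschitz bound
    -- local key lemma
    have key : ∀ x ∈ ball a r, ∀ y ∈ ball a r, ‖x - y‖ < r - dist x a →
        ‖g x - g y‖ ≤ 6 * c * ‖x - y‖ := by
      intro x hx y hy hd
      rcases eq_or_ne x y with rfl | hxy
      · simp
      have h0 : (0:ℝ) < ‖x - y‖ := norm_pos_iff.mpr (sub_ne_zero.mpr hxy)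
      set d : ℝ := ‖x - y‖ with hdd
      apply ContinuousLinearMap.opNorm_le_bound _ (by positivity)
      intro w
      rcases eq_or_ne w 0 with rfl | hw
      · simp
      have hw0 : (0:ℝ) < ‖w‖ := norm_pos_iff.mpr hw
      set z : W := x + (d / ‖w‖) • w with hz
      have hzx : z - x = (d / ‖w‖) • w := by simp [hz]
      have hzxn : ‖z - x‖ = d := by
        rw [hzx, norm_smul, Real.norm_eq_abs, abs_of_nonneg (by positivity)]
        field_simp
      have hzball : z ∈ ball a r := by
        rw [mem_ball]
        calc dist z a ≤ dist z x + dist x a := dist_triangle _ _ _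
          _ = d + dist x a := by rw [dist_eq_norm, hzxn]
          _ < r := by linarith
      have hA := h x hx z hzball
      have hB := h y hy z hzball
      have hC := h y hy x hx
      rw [hzxn] at hA
      have hzy : ‖z - y‖ ≤ 2 * d := by
        calc ‖z - y‖ = ‖(z - x) + (x - y)‖ := by abel_nf
          _ ≤ ‖z - x‖ + ‖x - y‖ := norm_add_le _ _
          _ = 2 * d := by rw [hzxn]; ring
      have hB' : ‖φ z - (φ y + (g y) (z - y))‖ ≤ 4 * (c * d ^ 2) := by
        calc ‖φ z - (φ y + (g y) (z - y))‖ ≤ c * ‖z - y‖ ^ 2 := hB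
          _ ≤ c * (2 * d) ^ 2 := by
              apply mul_le_mul_of_nonneg_left _ hc.le
              exact pow_le_pow_left₀ (norm_nonneg _) hzy 2
          _ = 4 * (c * d ^ 2) := by ring
      have hid : (g x - g y) (z - x) =
          (φ z - (φ y + g y (z - y))) - (φ z - (φ x + g x (z - x)))
            - (φ x - (φ y + g y (x - y))) := by
        simp only [ContinuousLinearMap.sub_apply, map_sub]
        abel
      have hbound : ‖(g x - g y) (z - x)‖ ≤ 6 * (c * d ^ 2) := by
        rw [hid]
        calc ‖_ - _ - _‖ ≤ ‖(φ z - (φ y + g y (z - y))) - (φ z - (φ x + g x (z - x)))‖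
              + ‖φ x - (φ y + g y (x - y))‖ := norm_sub_le _ _
          _ ≤ ‖φ z - (φ y + g y (z - y))‖ + ‖φ z - (φ x + g x (z - x))‖
              + ‖φ x - (φ y + g y (x - y))‖ := by
                have := norm_sub_le (φ z - (φ y + g y (z - y))) (φ z - (φ x + g x (z - x)))
                linarith
          _ ≤ 4 * (c * d ^ 2) + c * d ^ 2 + c * d ^ 2 := by
                have h1 : ‖φ x - (φ y + (g y) (x - y))‖ ≤ c * d ^ 2 := by
                  calc ‖φ x - (φ y + (g y) (x - y))‖ ≤ c * ‖x - y‖ ^ 2 := hC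
                    _ = c * d ^ 2 := by rw [hdd]
                linarith [hA, hB', h1]
          _ = 6 * (c * d ^ 2) := by ring
      have hwz : (g x - g y) w = (‖w‖ / d) • ((g x - g y) (z - x)) := by
        rw [hzx, map_smul, smul_smul]
        have : ‖w‖ / d * (d / ‖w‖) = 1 := by field_simp
        rw [this, one_smul]
      calc ‖(g x - g y) w‖ = (‖w‖ / d) * ‖(g x - g y) (z - x)‖ := by
            rw [hwz, norm_smul, Real.norm_eq_abs, abs_of_nonneg (by positivity)]
        _ ≤ (‖w‖ / d) * (6 * (c * d ^ 2)) := by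
            exact mul_le_mul_of_nonneg_left hbound (by positivity)
        _ = 6 * c * d * ‖w‖ := by field_simp
    -- chaining
    intro x hx y hy
    rcases eq_or_ne x y with rfl | hxy
    · simp
    have h0 : (0:ℝ) < ‖x - y‖ := norm_pos_iff.mpr (sub_ne_zero.mpr hxy)
    set d : ℝ := ‖x - y‖ with hdd
    have hxa : dist x a < r := mem_ball.mp hx
    have hya : dist y a < r := mem_ball.mp hy
    set μ : ℝ := min (r - dist x a) (r - dist y a) with hμdef
    have hμ : 0 < μ := lt_min (by linarith) (by linarith)
    obtain ⟨n, hn⟩ := exists_nat_gt (d / μ)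
    have hn0 : (0:ℝ) < n := lt_trans (div_pos h0 hμ) hn
    have hstep : d / n < μ := by
      rw [div_lt_iff₀ hn0]
      have := (div_lt_iff₀ hμ).mp hn
      linarith
    set p : ℕ → W := fun i => x + ((i : ℝ) / n) • (y - x) with hp
    have hpmem : ∀ i : ℕ, i ≤ n → dist (p i) a ≤ r - μ := by
      intro i hi
      have ht0 : (0:ℝ) ≤ (i : ℝ) / n := by positivity
      have ht1 : (i : ℝ) / n ≤ 1 := by
        rw [div_le_one hn0]; exact_mod_cast hi
      set t : ℝ := (i : ℝ) / n
      have hsplit : p i - a = (1 - t) • (x - a) + t • (y - a) := by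
        simp only [hp]
        module
      have hxr : ‖x - a‖ ≤ r - μ := by
        rw [← dist_eq_norm]
        have : μ ≤ r - dist x a := min_le_left _ _
        linarith
      have hyr : ‖y - a‖ ≤ r - μ := by
        rw [← dist_eq_norm]
        have : μ ≤ r - dist y a := min_le_right _ _
        linarith
      rw [dist_eq_norm, hsplit]
      calc ‖(1 - t) • (x - a) + t • (y - a)‖ ≤ ‖(1 - t) • (x - a)‖ + ‖t • (y - a)‖ :=
            norm_add_le _ _
        _ = (1 - t) * ‖x - a‖ + t * ‖y - a‖ := by
            rw [norm_smul, norm_smul, Real.norm_eq_abs, Real.norm_eq_abs,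
              abs_of_nonneg (by linarith), abs_of_nonneg ht0]
        _ ≤ (1 - t) * (r - μ) + t * (r - μ) := by
            apply add_le_add
            · exact mul_le_mul_of_nonneg_left hxr (by linarith)
            · exact mul_le_mul_of_nonneg_left hyr ht0
        _ = r - μ := by ring
    have hpball : ∀ i : ℕ, i ≤ n → p i ∈ ball a r := by
      intro i hi
      rw [mem_ball]
      have := hpmem i hi
      linarith
    have hpdiff : ∀ i : ℕ, p (i + 1) - p i = ((1:ℝ) / n) • (y - x) := by
      intro i
      have hc' : ((i:ℝ) + 1) / n - (i : ℝ) / n = 1 / n := by field_simp; ring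
      simp only [hp]
      push_cast
      rw [show x + (((i:ℝ) + 1) / n) • (y - x) - (x + ((i:ℝ) / n) • (y - x))
          = (((i:ℝ) + 1) / n - (i : ℝ) / n) • (y - x) by module, hc']
    have hpstep : ∀ i : ℕ, ‖p i - p (i + 1)‖ = d / n := by
      intro i
      rw [norm_sub_rev, hpdiff, norm_smul, Real.norm_eq_abs,
        abs_of_nonneg (by positivity), norm_sub_rev]
      rw [← hdd]; field_simp
    have hkey : ∀ i : ℕ, i < n → ‖g (p i) - g (p (i + 1))‖ ≤ 6 * c * (d / n) := by
      intro i hi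
      have h1 := key (p i) (hpball i hi.le) (p (i + 1)) (hpball (i + 1) hi)
      rw [hpstep i] at h1
      apply h1
      have := hpmem i hi.le
      linarith
    have htel := dist_le_range_sum_dist (fun i => g (p i)) n
    have hp0 : p 0 = x := by simp [hp]
    have hpn : p n = y := by
      simp only [hp]
      rw [div_self (ne_of_gt hn0), one_smul]
      abel
    have hsum : ∑ i ∈ Finset.range n, dist (g (p i)) (g (p (i + 1)))
        ≤ n * (6 * c * (d / n)) := by
      calc ∑ i ∈ Finset.range n, dist (g (p i)) (g (p (i + 1)))
          ≤ (Finset.range n).card • (6 * c * (d / n)) := by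
            apply Finset.sum_le_card_nsmul
            intro i hi
            rw [dist_eq_norm]
            exact hkey i (Finset.mem_range.mp hi)
        _ = n * (6 * c * (d / n)) := by
            rw [Finset.card_range, nsmul_eq_mul]
    have hfin : (n:ℝ) * (6 * c * (d / n)) = 6 * c * d := by field_simp
    calc ‖g x - g y‖ = dist (g (p 0)) (g (p n)) := by
          rw [hp0, hpn, dist_eq_norm]
      _ ≤ ∑ i ∈ Finset.range n, dist (g (p i)) (g (p (i + 1))) := htel
      _ ≤ n * (6 * c * (d / n)) := hsum
      _ = 6 * c * d := hfin
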